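/- Let Σ be the ranked alphabet with one constant ♯ and one binary symbol f, and let R over Σ consist of the single rule f(x₁, ♯) → f(x₁, x₁). Define the left combs by left₀ = ♯ and left_{n+1} = f(left_n, ♯), and let L = {left_n : n ≥ 0}. Then L is a recognizable tree language over Σ, but the descendant set R*_Σ(L) is not recognizable. -/

import Mathlib

set_option autoImplicit false

/-!
Basic framework: ranked alphabets, terms, term rewrite systems,
bottom-up tree automata, recognizability.
A ranked alphabet is modelled by a (finite) type `σ` together with an
arity function `ar : σ → ℕ`.  `Tm.var n` denotes the variable `x_{n+1}`,
so `T_Σ(X_m)` corresponds to terms all of whose variables satisfy `n < m`,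
and ground terms (`T_Σ`) are terms satisfying `Tm.Ground`.
-/

/-- Terms over the ranked alphabet `(σ, ar)` with variables `x₁, x₂, …`
(`var n` is `x_{n+1}`). -/
inductive Tm (σ : Type) (ar : σ → ℕ) : Type
  | var : ℕ → Tm σ ar
  | app : (f : σ) → (Fin (ar f) → Tm σ ar) → Tm σ ar

namespace Tm

variable {σ γ : Type} {ar : σ → ℕ} {arγ : γ → ℕ}

/-- Application of a substitution `θ` (assigning a term to each variable). -/
def subst (θ : ℕ → Tm σ ar) : Tm σ ar → Tm σ ar
  | var n => θ n
  | app f ts => app f fun i => (ts i).subst θ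

/-- A term is ground if it contains no variables. -/
def Ground : Tm σ ar → Prop
  | var _ => False
  | app _ ts => ∀ i, (ts i).Ground

/-- The set of (indices of) variables occurring in a term. -/
def vars : Tm σ ar → Set ℕ
  | var n => {n}
  | app _ ts => ⋃ i, (ts i).vars

/-- Number of occurrences of the variable `x_{n+1}` in a term. -/
def count (n : ℕ) : Tm σ ar → ℕ
  | var m => if m = n then 1 else 0
  | app _ ts => ∑ i, (ts i).count n

/-- A term is linear if every variable occurs at most once in it. -/
def Linear (t : Tm σ ar) : Prop := ∀ n, t.count n ≤ 1

/-- The symbol `s` occurs in the term. -/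
def symOccurs (s : σ) : Tm σ ar → Prop
  | var _ => False
  | app f ts => f = s ∨ ∃ i, (ts i).symOccurs s

/-- Height of a term (constants and variables have height 0). -/
def height : Tm σ ar → ℕ
  | var _ => 0
  | app _ ts => Finset.univ.sup fun i => (ts i).height + 1

/-- Renaming of the alphabet along an arity-preserving map. -/
def map (ι : σ → γ) (h : ∀ s, arγ (ι s) = ar s) : Tm σ ar → Tm γ arγ
  | var n => var n
  | app f ts => app (ι f) fun i => (ts (Fin.cast (h f) i)).map ι h

/-- The subterm of `t` at a position (a list of argument indices), if defined. -/
def subAt : Tm σ ar → List ℕ → Option (Tm σ ar)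
  | t, [] => some t
  | var _, _ :: _ => none
  | app f ts, i :: p => if h : i < ar f then (ts ⟨i, h⟩).subAt p else none

/-- Subterm relation. -/
inductive Subtm : Tm σ ar → Tm σ ar → Prop
  | refl (t : Tm σ ar) : Subtm t t
  | app {s : Tm σ ar} {f : σ} {ts : Fin (ar f) → Tm σ ar} (i : Fin (ar f)) :
      Subtm s (ts i) → Subtm s (Tm.app f ts)

end Tm

section Rewriting

variable {σ γ : Type} {ar : σ → ℕ} {arγ : γ → ℕ}

/-- One-step rewriting by the rule set `R`: apply a rule under a substitution
at the root, or rewrite inside one argument. -/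
inductive Step (R : Set (Tm σ ar × Tm σ ar)) : Tm σ ar → Tm σ ar → Prop
  | rule {l r : Tm σ ar} (θ : ℕ → Tm σ ar) (h : (l, r) ∈ R) :
      Step R (l.subst θ) (r.subst θ)
  | congr {f : σ} {ts : Fin (ar f) → Tm σ ar} {t' : Tm σ ar} (i : Fin (ar f)) :
      Step R (ts i) t' → Step R (Tm.app f ts) (Tm.app f (Function.update ts i t'))

/-- Many-step rewriting: reflexive-transitive closure of `Step`. -/
def Steps (R : Set (Tm σ ar × Tm σ ar)) : Tm σ ar → Tm σ ar → Prop :=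
  Relation.ReflTransGen (Step R)

/-- `R` is a term rewrite system: finitely many rules, and every variable of a
right-hand side occurs in the corresponding left-hand side. -/
def IsTRS (R : Set (Tm σ ar × Tm σ ar)) : Prop :=
  R.Finite ∧ ∀ lr ∈ R, lr.2.vars ⊆ lr.1.vars

/-- The set `R*(L)` of descendants of members of `L`. -/
def Desc (R : Set (Tm σ ar × Tm σ ar)) (L : Set (Tm σ ar)) : Set (Tm σ ar) :=
  {p | ∃ q ∈ L, Steps R q p}

/-- `R` is terminating: there is no infinite reduction sequence. -/
def Terminating (R : Set (Tm σ ar × Tm σ ar)) : Prop :=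
  ¬ ∃ f : ℕ → Tm σ ar, ∀ n, Step R (f n) (f (n + 1))

/-- `R` is confluent. -/
def Confluent (R : Set (Tm σ ar × Tm σ ar)) : Prop :=
  ∀ a b c, Steps R a b → Steps R a c → ∃ d, Steps R b d ∧ Steps R c d

/-- `u` is an `R`-normal form of `t`. -/
def NormalFormOf (R : Set (Tm σ ar × Tm σ ar)) (t u : Tm σ ar) : Prop :=
  Steps R t u ∧ ¬ ∃ v, Step R u v

/-- The term is a variable. -/
def IsVarTm (t : Tm σ ar) : Prop := ∃ n, t = Tm.var n

/-- Every left-hand side is linear. -/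
def LeftLinearTRS (R : Set (Tm σ ar × Tm σ ar)) : Prop :=
  ∀ lr ∈ R, lr.1.Linear

/-- All left- and right-hand sides are linear. -/
def LinearTRS (R : Set (Tm σ ar × Tm σ ar)) : Prop :=
  ∀ lr ∈ R, lr.1.Linear ∧ lr.2.Linear

/-- No rule has a variable as left-hand side or as right-hand side. -/
def CollapseFree (R : Set (Tm σ ar × Tm σ ar)) : Prop :=
  ∀ lr ∈ R, ¬ IsVarTm lr.1 ∧ ¬ IsVarTm lr.2

/-- Transport of a rule set along an arity-preserving renaming of the alphabet. -/
def mapRules (ι : σ → γ) (h : ∀ s, arγ (ι s) = ar s) (R : Set (Tm σ ar × Tm σ ar)) :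
    Set (Tm γ arγ × Tm γ arγ) :=
  (fun lr => (lr.1.map ι h, lr.2.map ι h)) '' R

end Rewriting

/-- A bottom-up tree automaton over `(σ, ar)` with state type `Q`:
transition rules `δ(q₁,…,qₙ) → q`, λ-rules `q → q'`, and final states. -/
structure BTA (σ : Type) (ar : σ → ℕ) (Q : Type) where
  trans : ∀ f : σ, (Fin (ar f) → Q) → Q → Prop
  eps : Q → Q → Prop
  final : Q → Prop

namespace BTA

variable {σ : Type} {ar : σ → ℕ} {Q : Type}

/-- `t →* q`: the (ground) term `t` can be rewritten to the state `q`. -/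
inductive Reach (A : BTA σ ar Q) : Tm σ ar → Q → Prop
  | app {f : σ} {ts : Fin (ar f) → Tm σ ar} {qs : Fin (ar f) → Q} {q : Q} :
      (∀ i, Reach A (ts i) (qs i)) → A.trans f qs q → Reach A (Tm.app f ts) q
  | eps {t : Tm σ ar} {q q' : Q} : Reach A t q → A.eps q q' → Reach A t q'

/-- The tree language recognized by the automaton. -/
def Lang (A : BTA σ ar Q) : Set (Tm σ ar) := {t | ∃ q, A.final q ∧ A.Reach t q}

end BTA

/-- A tree language is recognizable if some bottom-up tree automaton with a
finite state set recognizes it. -/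
def Recognizable {σ : Type} {ar : σ → ℕ} (L : Set (Tm σ ar)) : Prop :=
  ∃ (Q : Type) (_ : Finite Q) (A : BTA σ ar Q), A.Lang = L

/-- `R` (a TRS over all of `σ`, thought of as `sign(R)`) preserves
recognizability of finite tree languages: for every ranked alphabet extending
`σ` (i.e. every finite type with an arity-preserving injection from `σ`) and
every finite tree language of ground terms, the descendant set is recognizable. -/
def PRF {σ : Type} {ar : σ → ℕ} (R : Set (Tm σ ar × Tm σ ar)) : Prop :=
  ∀ (γ : Type) (arγ : γ → ℕ), Finite γ →
    ∀ ι : σ → γ, Function.Injective ι →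
      ∀ h : ∀ s, arγ (ι s) = ar s,
        ∀ L : Set (Tm γ arγ), L.Finite → (∀ t ∈ L, t.Ground) →
          Recognizable (Desc (mapRules ι h R) L)

/-- `R` preserves recognizability: as `PRF`, but for arbitrary recognizable
tree languages. -/
def PR {σ : Type} {ar : σ → ℕ} (R : Set (Tm σ ar × Tm σ ar)) : Prop :=
  ∀ (γ : Type) (arγ : γ → ℕ), Finite γ →
    ∀ ι : σ → γ, Function.Injective ι →
      ∀ h : ∀ s, arγ (ι s) = ar s,
        ∀ L : Set (Tm γ arγ), Recognizable L →
          Recognizable (Desc (mapRules ι h R) L)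

/-! ### Common setup for Statements 2 and 3: the alphabet `{f(2), ♯(0)}` and
the TRS `{ f(x₁, ♯) → f(x₁, x₁) }`. -/

inductive Sg2 : Type
  | f | sharp
deriving DecidableEq

instance instFintypeSg2 : Fintype Sg2 :=
  ⟨{Sg2.f, Sg2.sharp}, fun x => by cases x <;> simp⟩

def ar2 : Sg2 → ℕ
  | .f => 2
  | .sharp => 0

/-- the constant `♯` -/
def sharp2 : Tm Sg2 ar2 := .app .sharp ![]

/-- `f(a, b)` -/
def f2 (a b : Tm Sg2 ar2) : Tm Sg2 ar2 := .app .f ![a, b]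

/-- the TRS `{ f(x₁, ♯) → f(x₁, x₁) }` -/
def R2 : Set (Tm Sg2 ar2 × Tm Sg2 ar2) :=
  {(f2 (.var 0) sharp2, f2 (.var 0) (.var 0))}

/-! ### Statement 3 -/

/-- the left combs: `left₀ = ♯`, `left_{n+1} = f(left_n, ♯)` -/
def leftComb2 : ℕ → Tm Sg2 ar2
  | 0 => sharp2
  | n + 1 => f2 (leftComb2 n) sharp2

namespace Stmt3

open Tm

def i0 : Fin (ar2 Sg2.f) := ⟨0, by decide⟩
def i1 : Fin (ar2 Sg2.f) := ⟨1, by decide⟩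

lemma fin2 (i : Fin (ar2 Sg2.f)) : i = i0 ∨ i = i1 := by
  rcases i with ⟨i, hi⟩
  have hi2 : i < 2 := hi
  interval_cases i
  · exact Or.inl rfl
  · exact Or.inr rfl

lemma app_f_eta (ts : Fin (ar2 Sg2.f) → Tm Sg2 ar2) :
    Tm.app Sg2.f ts = f2 (ts i0) (ts i1) := by
  unfold f2
  congr 1
  funext i
  rcases fin2 i with rfl | rfl
  · rfl
  · rfl

lemma f2_inj {a b c d : Tm Sg2 ar2} (h : f2 a b = f2 c d) : a = c ∧ b = d := by
  unfold f2 at h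
  injection h with h1 h2
  exact ⟨congrFun h2 i0, congrFun h2 i1⟩

lemma f2_ne_sharp {a b : Tm Sg2 ar2} : f2 a b ≠ sharp2 := by
  unfold f2 sharp2
  intro h
  injection h with h1 h2
  exact absurd h1 (by simp)

lemma sharp_subst (θ : ℕ → Tm Sg2 ar2) : sharp2.subst θ = sharp2 := by
  show Tm.app Sg2.sharp _ = Tm.app Sg2.sharp _
  congr 1
  funext i
  exact i.elim0

lemma lhs_subst (θ : ℕ → Tm Sg2 ar2) :
    (f2 (.var 0) sharp2).subst θ = f2 (θ 0) sharp2 := by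
  show Tm.app Sg2.f _ = _
  rw [app_f_eta]
  unfold f2
  congr 1
  funext i
  rcases fin2 i with rfl | rfl
  · rfl
  · exact sharp_subst θ

lemma rhs_subst (θ : ℕ → Tm Sg2 ar2) :
    (f2 (.var 0) (.var 0)).subst θ = f2 (θ 0) (θ 0) := by
  show Tm.app Sg2.f _ = _
  rw [app_f_eta]
  rfl

lemma comb_inj : ∀ {n m : ℕ}, leftComb2 n = leftComb2 m → n = m := by
  intro n
  induction n with
  | zero =>
    intro m h
    cases m with
    | zero => rfl
    | succ m => exact absurd h.symm f2_ne_sharp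
  | succ n ih =>
    intro m h
    cases m with
    | zero => exact absurd h f2_ne_sharp
    | succ m => exact congrArg Nat.succ (ih (f2_inj h).1)

lemma R2_mem {l r : Tm Sg2 ar2} (h : (l, r) ∈ R2) :
    l = f2 (.var 0) sharp2 ∧ r = f2 (.var 0) (.var 0) := by
  simp only [R2, Set.mem_singleton_iff, Prod.mk.injEq] at h
  exact h

lemma step_src {s t : Tm Sg2 ar2} (h : Step R2 s t) : ∃ a b, s = f2 a b := by
  cases h with
  | rule θ hR =>
    obtain ⟨hl, hr⟩ := R2_mem hR
    subst hl; subst hr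
    exact ⟨θ 0, sharp2, lhs_subst θ⟩
  | @congr g ts t' i hs =>
    cases g with
    | sharp => exact absurd i.2 (by simp [ar2])
    | f => exact ⟨ts i0, ts i1, app_f_eta ts⟩

lemma step_tgt {s t : Tm Sg2 ar2} (h : Step R2 s t) : ∃ a b, t = f2 a b := by
  cases h with
  | rule θ hR =>
    obtain ⟨hl, hr⟩ := R2_mem hR
    subst hl; subst hr
    exact ⟨θ 0, θ 0, rhs_subst θ⟩
  | @congr g ts t' i hs =>
    cases g with
    | sharp => exact absurd i.2 (by simp [ar2])
    | f => exact ⟨_, _, app_f_eta _⟩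

lemma steps_from_sharp {t : Tm Sg2 ar2} (h : Steps R2 sharp2 t) : t = sharp2 := by
  rcases h.cases_head with h | ⟨c, hc, _⟩
  · exact h.symm
  · obtain ⟨a, b, hab⟩ := step_src hc
    exact absurd hab.symm f2_ne_sharp

lemma step_to_comb : ∀ (m : ℕ) {s t : Tm Sg2 ar2}, Step R2 s t → t = leftComb2 m → s = t := by
  intro m
  induction m with
  | zero =>
    intro s t h ht
    obtain ⟨a, b, hab⟩ := step_tgt h
    rw [ht] at hab
    exact absurd hab.symm f2_ne_sharp
  | succ m ih =>
    intro s t h ht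
    cases h with
    | rule θ hR =>
      obtain ⟨hl, hr⟩ := R2_mem hR
      subst hl; subst hr
      rw [rhs_subst θ] at ht ⊢
      rw [lhs_subst θ]
      have h2 : θ 0 = sharp2 := (f2_inj ht).2
      rw [h2]
    | @congr g ts t' i hs =>
      cases g with
      | sharp => exact absurd i.2 (by simp [ar2])
      | f =>
        rw [app_f_eta] at ht ⊢
        rcases fin2 i with rfl | rfl
        · have h1 : t' = leftComb2 m := (f2_inj ht).1
          have h2 : ts i1 = sharp2 := (f2_inj ht).2
          have h0 : ts i0 = t' := ih hs h1
          rw [app_f_eta (Function.update ts i0 t')]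
          show f2 (ts i0) (ts i1) = f2 t' (ts i1)
          rw [h0]
        · have h2 : t' = sharp2 := (f2_inj ht).2
          obtain ⟨a, b, hab⟩ := step_tgt hs
          rw [hab] at h2
          exact absurd h2 f2_ne_sharp

lemma steps_to_comb (m : ℕ) : ∀ {s : Tm Sg2 ar2}, Steps R2 s (leftComb2 m) → s = leftComb2 m := by
  intro s h
  induction h using Relation.ReflTransGen.head_induction_on with
  | refl => rfl
  | head hstep _ ih => exact (step_to_comb m hstep ih).trans ih

lemma steps_shape {s t : Tm Sg2 ar2} (h : Steps R2 s t) :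
    ∀ u v, s = f2 u v →
      ∃ a b, t = f2 a b ∧
        ((Steps R2 u a ∧ Steps R2 v b) ∨ ∃ w, Steps R2 u w ∧ Steps R2 w a ∧ Steps R2 w b) := by
  induction h using Relation.ReflTransGen.head_induction_on with
  | refl =>
    intro u v hs
    exact ⟨u, v, hs, Or.inl ⟨Relation.ReflTransGen.refl, Relation.ReflTransGen.refl⟩⟩
  | @head s s' hstep hsteps ih =>
    intro u v hs
    cases hstep with
    | rule θ hR =>
      obtain ⟨hl, hr⟩ := R2_mem hR
      subst hl; subst hr
      rw [lhs_subst θ] at hs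
      obtain ⟨hu, hv⟩ := f2_inj hs
      obtain ⟨a, b, hab, disj⟩ := ih (θ 0) (θ 0) (rhs_subst θ)
      refine ⟨a, b, hab, Or.inr ?_⟩
      rcases disj with ⟨ha, hb⟩ | ⟨w, hw, hwa, hwb⟩
      · exact ⟨θ 0, hu ▸ Relation.ReflTransGen.refl, ha, hb⟩
      · exact ⟨w, hu ▸ hw, hwa, hwb⟩
    | @congr g ts t' i hstep' =>
      cases g with
      | sharp => exact absurd i.2 (by simp [ar2])
      | f =>
        rw [app_f_eta] at hs
        obtain ⟨hu, hv⟩ := f2_inj hs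
        rcases fin2 i with rfl | rfl
        · obtain ⟨a, b, hab, disj⟩ := ih t' v (by
            rw [app_f_eta]
            show f2 t' (ts i1) = f2 t' v
            rw [hv])
          refine ⟨a, b, hab, ?_⟩
          have hstep'' : Step R2 u t' := hu ▸ hstep'
          rcases disj with ⟨ha, hb⟩ | ⟨w, hw, hwa, hwb⟩
          · exact Or.inl ⟨Relation.ReflTransGen.head hstep'' ha, hb⟩
          · exact Or.inr ⟨w, Relation.ReflTransGen.head hstep'' hw, hwa, hwb⟩
        · obtain ⟨a, b, hab, disj⟩ := ih u t' (by
            rw [app_f_eta]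
            show f2 (ts i0) t' = f2 u t'
            rw [hu])
          refine ⟨a, b, hab, ?_⟩
          have hstep'' : Step R2 v t' := hv ▸ hstep'
          rcases disj with ⟨ha, hb⟩ | ⟨w, hw, hwa, hwb⟩
          · exact Or.inl ⟨ha, Relation.ReflTransGen.head hstep'' hb⟩
          · exact Or.inr ⟨w, hw, hwa, hwb⟩

end Stmt3
namespace Stmt3

/-- Automaton for the left combs: state `false` = "is ♯", `true` = "is a comb". -/
def A3 : BTA Sg2 ar2 Bool where
  trans g qs q :=
    match g with
    | .sharp => q = false
    | .f => qs i0 = true ∧ qs i1 = false ∧ q = true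
  eps a b := a = false ∧ b = true
  final q := q = true

lemma reach3 : ∀ {t : Tm Sg2 ar2} {q : Bool}, A3.Reach t q →
    (q = false → t = sharp2) ∧ (q = true → ∃ n, t = leftComb2 n) := by
  intro t q h
  induction h with
  | @app g ts qs q hts htrans ih =>
    cases g with
    | sharp =>
      have hq : q = false := htrans
      subst hq
      refine ⟨fun _ => ?_, fun h => by simp at h⟩
      show Tm.app Sg2.sharp ts = Tm.app Sg2.sharp _
      congr 1
      funext i
      exact absurd i.2 (by simp [ar2])
    | f =>
      obtain ⟨h0, h1, hq⟩ := htrans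
      subst hq
      refine ⟨fun h => by simp at h, fun _ => ?_⟩
      obtain ⟨n, hn⟩ := (ih i0).2 h0
      have hs : ts i1 = sharp2 := (ih i1).1 h1
      refine ⟨n + 1, ?_⟩
      rw [app_f_eta ts, hn, hs]
      rfl
  | @eps t q q' hr heps ih =>
    obtain ⟨hq, hq'⟩ := heps
    subst hq'
    refine ⟨fun h => by simp at h, fun _ => ⟨0, ih.1 hq⟩⟩

lemma reach_comb : ∀ n, A3.Reach (leftComb2 n) true := by
  intro n
  induction n with
  | zero =>
    refine BTA.Reach.eps (q := false) ?_ ⟨rfl, rfl⟩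
    exact @BTA.Reach.app Sg2 ar2 Bool A3 Sg2.sharp ![] (fun i => i.elim0) false
      (fun i => i.elim0) rfl
  | succ n ih =>
    refine @BTA.Reach.app Sg2 ar2 Bool A3 Sg2.f ![leftComb2 n, sharp2] ![true, false] true
      ?_ ⟨rfl, rfl, rfl⟩
    intro i
    rcases fin2 i with rfl | rfl
    · exact ih
    · exact @BTA.Reach.app Sg2 ar2 Bool A3 Sg2.sharp ![] (fun i => i.elim0) false
        (fun i => i.elim0) rfl

lemma recog_combs : Recognizable {t : Tm Sg2 ar2 | ∃ n : ℕ, t = leftComb2 n} := by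
  refine ⟨Bool, inferInstance, A3, ?_⟩
  ext t
  constructor
  · rintro ⟨q, hq, hr⟩
    have hq' : q = true := hq
    subst hq'
    exact (reach3 hr).2 rfl
  · rintro ⟨n, rfl⟩
    exact ⟨true, rfl, reach_comb n⟩

lemma reach_decomp {Q : Type} {A : BTA Sg2 ar2 Q} :
    ∀ {t : Tm Sg2 ar2} {q : Q}, A.Reach t q → ∀ a b, t = f2 a b →
      ∃ q2, A.Reach b q2 ∧ ∀ b', A.Reach b' q2 → A.Reach (f2 a b') q := by
  intro t q h
  induction h with
  | @app g ts qs q hts htrans ih =>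
    intro a b hab
    cases g with
    | sharp =>
      exfalso
      rw [show f2 a b = Tm.app Sg2.f ![a, b] from rfl] at hab
      injection hab with h1 _
      exact Sg2.noConfusion h1
    | f =>
      rw [app_f_eta ts] at hab
      obtain ⟨ha, hb⟩ := f2_inj hab.symm
      refine ⟨qs i1, hb ▸ hts i1, fun b' hb' => ?_⟩
      refine @BTA.Reach.app Sg2 ar2 Q A Sg2.f ![a, b'] qs q ?_ htrans
      intro i
      rcases fin2 i with rfl | rfl
      · show A.Reach a (qs i0)
        exact ha ▸ hts i0
      · exact hb'
  | @eps t q q' hr heps ih =>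
    intro a b hab
    obtain ⟨q2, h1, h2⟩ := ih a b hab
    exact ⟨q2, h1, fun b' hb' => BTA.Reach.eps (h2 b' hb') heps⟩

lemma comb_step (n : ℕ) :
    Step R2 (leftComb2 (n + 1)) (f2 (leftComb2 n) (leftComb2 n)) := by
  have h := Step.rule (R := R2) (l := f2 (.var 0) sharp2) (r := f2 (.var 0) (.var 0))
    (fun _ => leftComb2 n) rfl
  rw [lhs_subst, rhs_subst] at h
  exact h

lemma mem_D (n : ℕ) :
    f2 (leftComb2 n) (leftComb2 n) ∈ Desc R2 {t : Tm Sg2 ar2 | ∃ n : ℕ, t = leftComb2 n} :=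
  ⟨leftComb2 (n + 1), ⟨n + 1, rfl⟩, Relation.ReflTransGen.single (comb_step n)⟩

lemma not_mem_D {n m : ℕ} (hm : 1 ≤ m)
    (h : f2 (leftComb2 n) (leftComb2 m) ∈ Desc R2 {t : Tm Sg2 ar2 | ∃ n : ℕ, t = leftComb2 n}) :
    n = m := by
  obtain ⟨q, ⟨k, rfl⟩, hsteps⟩ := h
  cases k with
  | zero =>
    have := steps_from_sharp hsteps
    exact absurd this f2_ne_sharp
  | succ k =>
    obtain ⟨a, b, hab, disj⟩ := steps_shape hsteps (leftComb2 k) sharp2 rfl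
    obtain ⟨ha, hb⟩ := f2_inj hab
    subst ha; subst hb
    rcases disj with ⟨_, hvb⟩ | ⟨w, _, hwa, hwb⟩
    · have := steps_from_sharp hvb
      cases m with
      | zero => omega
      | succ m => exact absurd this f2_ne_sharp
    · have h1 := steps_to_comb n hwa
      have h2 := steps_to_comb m hwb
      exact comb_inj (h1.symm.trans h2)

lemma not_recog_D :
    ¬ Recognizable (Desc R2 {t : Tm Sg2 ar2 | ∃ n : ℕ, t = leftComb2 n}) := by
  rintro ⟨Q, hQ, A, hL⟩
  have key : ∀ n : ℕ, ∃ q q2 : Q, A.final q ∧ A.Reach (leftComb2 (n + 1)) q2 ∧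
      ∀ b', A.Reach b' q2 → A.Reach (f2 (leftComb2 (n + 1)) b') q := by
    intro n
    have hmem : f2 (leftComb2 (n + 1)) (leftComb2 (n + 1)) ∈ A.Lang := by
      rw [hL]; exact mem_D (n + 1)
    obtain ⟨q, hq, hr⟩ := hmem
    obtain ⟨q2, h1, h2⟩ := reach_decomp hr (leftComb2 (n + 1)) (leftComb2 (n + 1)) rfl
    exact ⟨q, q2, hq, h1, h2⟩
  choose q q2 hfin hreach hclose using key
  obtain ⟨n, m, hne, heq⟩ := Finite.exists_ne_map_eq_of_infinite q2
  have hr : A.Reach (leftComb2 (m + 1)) (q2 n) := heq ▸ hreach m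
  have hacc : A.Reach (f2 (leftComb2 (n + 1)) (leftComb2 (m + 1))) (q n) :=
    hclose n _ hr
  have hmem : f2 (leftComb2 (n + 1)) (leftComb2 (m + 1)) ∈ A.Lang := ⟨q n, hfin n, hacc⟩
  rw [hL] at hmem
  have := not_mem_D (by omega) hmem
  omega

end Stmt3

theorem stmt_3 :
    Recognizable {t : Tm Sg2 ar2 | ∃ n : ℕ, t = leftComb2 n} ∧
    ¬ Recognizable (Desc R2 {t : Tm Sg2 ar2 | ∃ n : ℕ, t = leftComb2 n}) :=
  ⟨Stmt3.recog_combs, Stmt3.not_recog_D⟩
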